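/- Let x, y : Fin n → ℂ both be non-increasing with respect to the lexicographic order on ℂ, and suppose x is majorized by y (x ≺ y). Then there exists a generalized doubly stochastic matrix P : Matrix (Fin n) (Fin n) ℂ such that the row vector x equals y multiplied on the right by P, i.e., x = y ᵥ* P. -/

import Mathlib

/-- The lexicographic order on ℂ. -/
def CLexLe (z₁ z₂ : ℂ) : Prop :=
  z₁.re < z₂.re ∨ (z₁.re = z₂.re ∧ z₁.im ≤ z₂.im)

/-- A vector `x : Fin n → ℂ` is non-increasing w.r.t. the lexicographic order. -/
def NonIncreasing {n : ℕ} (x : Fin n → ℂ) : Prop :=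
  ∀ i j : Fin n, i ≤ j → CLexLe (x j) (x i)

/-- Partial sum of the first `k` entries of `x`. -/
noncomputable def partialSum {n : ℕ} (x : Fin n → ℂ) (k : ℕ) : ℂ :=
  ∑ i ∈ Finset.univ.filter (fun i : Fin n => (i : ℕ) < k), x i

/-- Majorization: all proper partial sums are ≤ in the lexicographic order and
the total sums agree. -/
def Maj {n : ℕ} (x y : Fin n → ℂ) : Prop :=
  (∀ k : ℕ, 1 ≤ k → k ≤ n - 1 → CLexLe (partialSum x k) (partialSum y k)) ∧
    (∑ i, x i) = ∑ i, y i

/-- A matrix is generalized doubly stochastic if every row sums to 1 and every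
column sums to 1 (entries may be arbitrary complex numbers). -/
def IsGenDoublyStochastic {n : ℕ} (A : Matrix (Fin n) (Fin n) ℂ) : Prop :=
  (∀ i, ∑ j, A i j = 1) ∧ (∀ j, ∑ i, A i j = 1)

lemma clex_trans {a b c : ℂ} (h : CLexLe a b) (g : CLexLe b c) : CLexLe a c := by
  unfold CLexLe at *
  rcases h with h | ⟨h1, h2⟩ <;> rcases g with g | ⟨g1, g2⟩
  · left; linarith
  · left; linarith
  · left; linarith
  · right; constructor <;> linarith

lemma clex_antisymm {a b : ℂ} (h : CLexLe a b) (g : CLexLe b a) : a = b := by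
  unfold CLexLe at *
  rcases h with h | ⟨h1, h2⟩ <;> rcases g with g | ⟨g1, g2⟩ <;>
    first
      | (exfalso; linarith)
      | (apply Complex.ext <;> linarith)

lemma clex_sub {t a b : ℂ} (h : CLexLe a b) : CLexLe (t - b) (t - a) := by
  unfold CLexLe at *
  simp only [Complex.sub_re, Complex.sub_im]
  rcases h with h | ⟨h1, h2⟩
  · left; linarith
  · right; constructor <;> linarith

lemma psum_zero {n : ℕ} (x : Fin n → ℂ) : partialSum x 0 = 0 := by
  simp [partialSum]

lemma psum_succ {n : ℕ} (x : Fin n → ℂ) (k : ℕ) (hk : k < n) :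
    partialSum x (k + 1) = partialSum x k + x ⟨k, hk⟩ := by
  unfold partialSum
  have hset : Finset.univ.filter (fun i : Fin n => (i : ℕ) < k + 1) =
      insert ⟨k, hk⟩ (Finset.univ.filter (fun i : Fin n => (i : ℕ) < k)) := by
    ext i
    simp [Nat.lt_succ_iff_lt_or_eq, Fin.ext_iff, or_comm]; omega
  rw [hset, Finset.sum_insert (by simp), add_comm]

lemma psum_total {n : ℕ} (x : Fin n → ℂ) : partialSum x n = ∑ i, x i := by
  unfold partialSum
  congr 1
  ext i
  simp [i.isLt]

/-- If `x` is majorized by `y` (both non-increasingly sorted), then there exists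
a generalized doubly stochastic matrix `P` with `x = y ᵥ* P`. -/
theorem maj_exists_genDoublyStochastic {n : ℕ} (x y : Fin n → ℂ)
    (hx : NonIncreasing x) (hy : NonIncreasing y) (hxy : Maj x y) :
    ∃ P : Matrix (Fin n) (Fin n) ℂ, IsGenDoublyStochastic P ∧ x = Matrix.vecMul y P := by
  obtain ⟨hmaj, htot⟩ := hxy
  rcases Nat.eq_zero_or_pos n with h0 | hn
  · subst h0
    exact ⟨0, ⟨fun i => i.elim0, fun j => j.elim0⟩, funext fun j => j.elim0⟩
  have hnC : (n : ℂ) ≠ 0 := Nat.cast_ne_zero.mpr (by omega)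
  by_cases hyc : ∀ i j : Fin n, y i = y j
  · -- y is constant; show x = y and use P = J/n
    set c : ℂ := y ⟨0, hn⟩ with hc
    have hyc' : ∀ i : Fin n, y i = c := fun i => hyc i ⟨0, hn⟩
    have hsy : (∑ i, y i) = (n : ℂ) * c := by
      rw [Finset.sum_congr rfl (fun i _ => hyc' i), Finset.sum_const, Finset.card_univ,
        Fintype.card_fin, nsmul_eq_mul]
    have hxeq : ∀ i : Fin n, x i = c := by
      rcases eq_or_lt_of_le (Nat.succ_le_of_lt hn) with h1 | h2
      · -- n = 1
        subst h1
        intro i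
        simp only [Fin.sum_univ_succ, Finset.univ_eq_empty, Finset.sum_empty,
          add_zero] at htot
        have hi : i = ⟨0, hn⟩ := Subsingleton.elim _ _
        rw [hi]
        exact htot
      · -- n ≥ 2
        have hn2 : 2 ≤ n := h2
        have hpy : ∀ k : ℕ, k ≤ n → partialSum y k = (k : ℂ) * c := by
          intro k
          induction k with
          | zero => intro _; simp [psum_zero]
          | succ m ih =>
            intro hm
            rw [psum_succ y m (by omega), ih (by omega), hyc' ⟨m, by omega⟩]
            push_cast; ring
        have h1 : CLexLe (x ⟨0, hn⟩) c := by
          have := hmaj 1 le_rfl (by omega)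
          rw [show (1 : ℕ) = 0 + 1 from rfl, psum_succ x 0 hn, psum_succ y 0 hn,
            psum_zero, psum_zero] at this
          simpa [hc] using this
        have hlast : CLexLe c (x ⟨n - 1, by omega⟩) := by
          have hm := hmaj (n - 1) (by omega) le_rfl
          rw [hpy (n - 1) (by omega)] at hm
          have hsplit : partialSum x n = partialSum x (n - 1) + x ⟨n - 1, by omega⟩ := by
            have := psum_succ x (n - 1) (by omega)
            rwa [show n - 1 + 1 = n from by omega] at this
          have hxn : partialSum x n = (n : ℂ) * c := by
            rw [psum_total, htot, hsy]
          have hx1 : x ⟨n - 1, by omega⟩ = (n : ℂ) * c - partialSum x (n - 1) := by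
            rw [← hxn, hsplit]; ring
          have hcast : ((n - 1 : ℕ) : ℂ) = (n : ℂ) - 1 := by
            push_cast [Nat.cast_sub (by omega : 1 ≤ n)]; ring
          have hkey : CLexLe ((n : ℂ) * c - ((n - 1 : ℕ) : ℂ) * c)
              ((n : ℂ) * c - partialSum x (n - 1)) := clex_sub hm
          rw [← hx1] at hkey
          have : (n : ℂ) * c - ((n - 1 : ℕ) : ℂ) * c = c := by
            rw [hcast]; ring
          rwa [this] at hkey
        intro i
        have hi0 : CLexLe (x i) (x ⟨0, hn⟩) := hx ⟨0, hn⟩ i (by simp [Fin.le_def])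
        have hil : CLexLe (x ⟨n - 1, by omega⟩) (x i) := by
          apply hx i ⟨n - 1, by omega⟩
          simp [Fin.le_def]; omega
        exact clex_antisymm (clex_trans hi0 h1) (clex_trans hlast hil)
    refine ⟨fun _ _ => (n : ℂ)⁻¹, ⟨fun i => ?_, fun j => ?_⟩, funext fun j => ?_⟩
    · simp [Finset.sum_const, Finset.card_univ, nsmul_eq_mul, mul_inv_cancel₀ hnC]
    · simp [Finset.sum_const, Finset.card_univ, nsmul_eq_mul, mul_inv_cancel₀ hnC]
    · simp only [Matrix.vecMul, dotProduct]
      rw [← Finset.sum_mul, hsy, hxeq j]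
      field_simp
  · -- y nonconstant
    push_neg at hyc
    obtain ⟨p, q, hpq⟩ := hyc
    set s : ℂ := ∑ i, y i with hs
    set d : ℂ := y p - y q with hd
    have hd0 : d ≠ 0 := sub_ne_zero.mpr hpq
    set a : Fin n → ℂ := fun i =>
      ((if i = p then (1 : ℂ) else 0) - (if i = q then (1 : ℂ) else 0)) / d with ha
    set b : Fin n → ℂ := fun j => x j - s / n with hb
    have hsa : (∑ i, a i) = 0 := by
      simp only [ha]
      rw [← Finset.sum_div, Finset.sum_sub_distrib]
      simp [Finset.sum_ite_eq', Finset.sum_ite_eq]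
    have hsay : (∑ i, a i * y i) = 1 := by
      have : ∀ i, a i * y i =
          ((if i = p then y i else 0) - (if i = q then y i else 0)) / d := by
        intro i
        simp only [ha]
        split_ifs <;> ring
      rw [Finset.sum_congr rfl (fun i _ => this i)]
      rw [← Finset.sum_div, Finset.sum_sub_distrib]
      simp [hd, div_self hd0, sub_eq_zero, hpq]
    have hsb : (∑ j, b j) = 0 := by
      simp only [hb, Finset.sum_sub_distrib, Finset.sum_const, Finset.card_univ,
        Fintype.card_fin, nsmul_eq_mul]
      rw [htot]
      field_simp; ring
    refine ⟨fun i j => (n : ℂ)⁻¹ + a i * b j, ⟨fun i => ?_, fun j => ?_⟩,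
      funext fun j => ?_⟩
    · rw [Finset.sum_add_distrib, Finset.sum_const, Finset.card_univ, Fintype.card_fin,
        nsmul_eq_mul, ← Finset.mul_sum, hsb, mul_zero, add_zero,
        mul_inv_cancel₀ hnC]
    · rw [Finset.sum_add_distrib, Finset.sum_const, Finset.card_univ, Fintype.card_fin,
        nsmul_eq_mul, ← Finset.sum_mul, hsa, zero_mul, add_zero,
        mul_inv_cancel₀ hnC]
    · simp only [Matrix.vecMul, dotProduct]
      simp only [mul_add]
      rw [Finset.sum_add_distrib, ← Finset.sum_mul, ← hs]
      have : (∑ i, y i * (a i * b j)) = (∑ i, a i * y i) * b j := by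
        rw [Finset.sum_mul]
        exact Finset.sum_congr rfl fun i _ => by ring
      rw [this, hsay, one_mul, hb]
      simp only
      field_simp; ring
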